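/- Let w : ℝ → ℝ be continuously differentiable on [-1,1] with w(−1) = w(1) = 0 and ∫_{-1}^{1} w(t) dt = 1, and let f : ℝ → ℝ be continuously differentiable. Then for every x₀ ∈ ℝ, the limit as h → 0⁺ of −(1/h) ∫_{-1}^{1} w'(t) f(x₀ + h t) dt exists and equals f'(x₀). -/

import Mathlib

open Filter Topology intervalIntegral Set

/-- First-order differentiation by integration: if `w` is continuously differentiable on
`[-1,1]` (with derivative `w'`), vanishes at `±1`, and has total integral `1`, then for
continuously differentiable `f`,
`−(1/h) ∫_{-1}^{1} w'(t) f(x₀+ht) dt → f'(x₀)` as `h → 0⁺`. -/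
theorem lanczos_general_first_derivative (w w' f : ℝ → ℝ)
    (hw : ∀ t ∈ Icc (-1 : ℝ) 1, HasDerivWithinAt w (w' t) (Icc (-1 : ℝ) 1) t)
    (hw' : ContinuousOn w' (Icc (-1 : ℝ) 1))
    (hwm : w (-1) = 0) (hwp : w 1 = 0)
    (hint : ∫ t in (-1 : ℝ)..1, w t = 1)
    (hf : ContDiff ℝ 1 f) (x₀ : ℝ) :
    Tendsto (fun h : ℝ => -(1 / h) * ∫ t in (-1 : ℝ)..1, w' t * f (x₀ + h * t))
      (𝓝[>] (0 : ℝ)) (𝓝 (deriv f x₀)) := by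
  have huIcc : ((Set.uIcc (-1 : ℝ) 1) : Set ℝ) = Icc (-1 : ℝ) 1 := uIcc_of_le (by norm_num)
  have hwc : ContinuousOn w (Icc (-1 : ℝ) 1) := fun t ht => (hw t ht).continuousWithinAt
  have hf' : Continuous (deriv f) := hf.continuous_deriv le_rfl
  have hfd : Differentiable ℝ f := hf.differentiable one_ne_zero
  -- clamp
  set c : ℝ → ℝ := fun t => max (-1) (min t 1) with hc
  have hcmem : ∀ t, c t ∈ Icc (-1 : ℝ) 1 := by
    intro t
    constructor
    · exact le_max_left _ _
    · simp [hc, max_le_iff, min_le_right, (by norm_num : (-1:ℝ) ≤ 1)]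
  have hceq : ∀ t ∈ Icc (-1 : ℝ) 1, c t = t := by
    intro t ht
    simp [hc, min_eq_left ht.2, max_eq_right ht.1]
  set W : ℝ → ℝ := fun t => w (c t) with hW
  have hWc : Continuous W :=
    hwc.comp_continuous (continuous_const.max (continuous_id.min continuous_const)) hcmem
  have hWeq : ∀ t ∈ Icc (-1 : ℝ) 1, W t = w t := fun t ht => by rw [hW]; simp [hceq t ht]
  -- continuity of the parametric integral
  have hcont : Continuous fun h : ℝ => ∫ t in (-1 : ℝ)..1, W t * deriv f (x₀ + h * t) := by
    apply intervalIntegral.continuous_parametric_intervalIntegral_of_continuous'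
    exact (hWc.comp continuous_snd).mul
      (hf'.comp (continuous_const.add (continuous_fst.mul continuous_snd)))
  have hval : (∫ t in (-1 : ℝ)..1, W t * deriv f (x₀ + (0:ℝ) * t)) = deriv f x₀ := by
    simp only [zero_mul, add_zero]
    rw [intervalIntegral.integral_mul_const]
    have : (∫ t in (-1 : ℝ)..1, W t) = ∫ t in (-1 : ℝ)..1, w t := by
      apply intervalIntegral.integral_congr
      rw [huIcc]; exact hWeq
    rw [this, hint, one_mul]
  have htend : Tendsto (fun h : ℝ => ∫ t in (-1 : ℝ)..1, W t * deriv f (x₀ + h * t))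
      (𝓝[>] (0 : ℝ)) (𝓝 (deriv f x₀)) := by
    have := hcont.tendsto 0
    rw [hval] at this
    exact this.mono_left nhdsWithin_le_nhds
  apply htend.congr'
  filter_upwards [self_mem_nhdsWithin] with h (hh : 0 < h)
  -- integration by parts
  have hv : ∀ t ∈ (Set.uIcc (-1 : ℝ) 1),
      HasDerivWithinAt (fun t => f (x₀ + h * t)) (h * deriv f (x₀ + h * t)) (Set.uIcc (-1 : ℝ) 1) t := by
    intro t _
    have h1 : HasDerivAt (fun t : ℝ => x₀ + h * t) h t := by
      simpa using ((hasDerivAt_id t).const_mul h).const_add x₀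
    have h2 : HasDerivAt f (deriv f (x₀ + h * t)) (x₀ + h * t) := (hfd _).hasDerivAt
    have := (h2.comp t h1)
    rw [mul_comm] at this
    exact this.hasDerivWithinAt
  have hu : ∀ t ∈ (Set.uIcc (-1 : ℝ) 1), HasDerivWithinAt w (w' t) (Set.uIcc (-1 : ℝ) 1) t := by
    rw [huIcc]; exact hw
  have hu' : IntervalIntegrable w' MeasureTheory.volume (-1) 1 :=
    (huIcc ▸ hw' : ContinuousOn w' (Set.uIcc (-1:ℝ) 1)).intervalIntegrable
  have hv' : IntervalIntegrable (fun t => h * deriv f (x₀ + h * t)) MeasureTheory.volume (-1) 1 :=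
    (continuous_const.mul (hf'.comp (continuous_const.add
      (continuous_const.mul continuous_id)))).intervalIntegrable _ _
  have key := intervalIntegral.integral_deriv_mul_eq_sub_of_hasDerivWithinAt hu hv hu' hv'
  simp only [hwp, hwm, zero_mul, sub_zero, sub_self] at key
  have hint1 : IntervalIntegrable (fun t => w' t * f (x₀ + h * t)) MeasureTheory.volume (-1) 1 := by
    apply ContinuousOn.intervalIntegrable
    rw [huIcc]
    exact hw'.mul ((hf.continuous.comp (continuous_const.add
      (continuous_const.mul continuous_id))).continuousOn)
  have hint2 : IntervalIntegrable (fun t => w t * (h * deriv f (x₀ + h * t)))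
      MeasureTheory.volume (-1) 1 := by
    apply ContinuousOn.intervalIntegrable
    rw [huIcc]
    exact hwc.mul ((continuous_const.mul (hf'.comp (continuous_const.add
      (continuous_const.mul continuous_id)))).continuousOn)
  rw [intervalIntegral.integral_add hint1 hint2] at key
  have hsplit : (∫ t in (-1 : ℝ)..1, w t * (h * deriv f (x₀ + h * t)))
      = h * ∫ t in (-1 : ℝ)..1, w t * deriv f (x₀ + h * t) := by
    rw [← intervalIntegral.integral_const_mul]
    congr 1; funext t; ring
  rw [hsplit] at key
  have hL : (∫ t in (-1 : ℝ)..1, w' t * f (x₀ + h * t))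
      = -(h * ∫ t in (-1 : ℝ)..1, w t * deriv f (x₀ + h * t)) := by linarith
  have hWw : (∫ t in (-1 : ℝ)..1, W t * deriv f (x₀ + h * t))
      = ∫ t in (-1 : ℝ)..1, w t * deriv f (x₀ + h * t) := by
    apply intervalIntegral.integral_congr
    rw [huIcc]
    intro t ht
    simp [hWeq t ht]
  rw [hL, hWw]
  field_simp
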